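/- Let A be a bounded linear operator on a complex Hilbert space H and let x, y ∈ H. For every α ∈ [0,1], |⟨A x, y⟩|² ≤ ⟨|A|^{2α} x, x⟩ · ⟨|A*|^{2(1−α)} y, y⟩, where |A| = (A*A)^{1/2} and |A*| = (A A*)^{1/2}. -/

import Mathlib

set_option maxHeartbeats 1000000


open ContinuousLinearMap Polynomial

section Aux

variable {H : Type*} [NormedAddCommGroup H] [InnerProductSpace ℂ H] [CompleteSpace H]

private lemma mcs_add_rpow {a b p : ℝ} (ha : 0 ≤ a) (hb : 0 ≤ b) (hp : 0 ≤ p) (hp1 : p ≤ 1) :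
    (a + b) ^ p ≤ a ^ p + b ^ p := by
  lift a to NNReal using ha
  lift b to NNReal using hb
  exact_mod_cast NNReal.rpow_add_le_add_rpow a b hp hp1

private lemma mcs_pow_comm (A : H →L[ℂ] H) (n : ℕ) :
    A * (adjoint A * A) ^ n = (A * adjoint A) ^ n * A := by
  induction n with
  | zero => simp
  | succ n ih =>
    rw [pow_succ, pow_succ, ← mul_assoc, ih]
    simp only [mul_assoc]

private lemma mcs_aeval_comm (A : H →L[ℂ] H) (q : ℝ[X]) :
    A * aeval (adjoint A * A) q = aeval (A * adjoint A) q * A := by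
  induction q using Polynomial.induction_on' with
  | add p q hp hq => rw [map_add, map_add, mul_add, add_mul, hp, hq]
  | monomial n r =>
    rw [aeval_monomial, aeval_monomial, ← mul_assoc, ← Algebra.commutes r A, mul_assoc,
      mcs_pow_comm, ← mul_assoc]

private lemma mcs_sa_left (A : H →L[ℂ] H) : IsSelfAdjoint (adjoint A * A) := by
  rw [← star_eq_adjoint]; exact IsSelfAdjoint.star_mul_self A

private lemma mcs_sa_right (A : H →L[ℂ] H) : IsSelfAdjoint (A * adjoint A) := by
  rw [← star_eq_adjoint]; exact IsSelfAdjoint.mul_star_self A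

private lemma mcs_nonneg_left (A : H →L[ℂ] H) : (0 : H →L[ℂ] H) ≤ adjoint A * A := by
  rw [← star_eq_adjoint]; exact star_mul_self_nonneg A

private lemma mcs_nonneg_right (A : H →L[ℂ] H) : (0 : H →L[ℂ] H) ≤ A * adjoint A := by
  rw [← star_eq_adjoint]; exact mul_star_self_nonneg A

/-- Intertwining: `A · f(A*A) = f(AA*) · A` for `f` continuous on `[0,∞)`. -/
private lemma mcs_cfc_comm (A : H →L[ℂ] H) (f : ℝ → ℝ)
    (hf : ContinuousOn f {t : ℝ | 0 ≤ t}) :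
    A * cfc f (adjoint A * A) = cfc f (A * adjoint A) * A := by
  have hP : IsSelfAdjoint (adjoint A * A) := mcs_sa_left A
  have hQ : IsSelfAdjoint (A * adjoint A) := mcs_sa_right A
  have hPpos : spectrum ℝ (adjoint A * A) ⊆ {t : ℝ | 0 ≤ t} :=
    fun t ht => spectrum_nonneg_of_nonneg (mcs_nonneg_left A) ht
  have hQpos : spectrum ℝ (A * adjoint A) ⊆ {t : ℝ | 0 ≤ t} :=
    fun t ht => spectrum_nonneg_of_nonneg (mcs_nonneg_right A) ht
  set M : ℝ := max (max (sSup (spectrum ℝ (adjoint A * A))) (sSup (spectrum ℝ (A * adjoint A)))) 0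
    with hM
  have hPM : spectrum ℝ (adjoint A * A) ⊆ Set.Icc 0 M := fun t ht =>
    ⟨hPpos ht, le_max_of_le_left (le_max_of_le_left
      (le_csSup (spectrum.isCompact (adjoint A * A)).bddAbove ht))⟩
  have hQM : spectrum ℝ (A * adjoint A) ⊆ Set.Icc 0 M := fun t ht =>
    ⟨hQpos ht, le_max_of_le_left (le_max_of_le_right
      (le_csSup (spectrum.isCompact (A * adjoint A)).bddAbove ht))⟩
  have hIcc : Set.Icc (0:ℝ) M ⊆ {t : ℝ | 0 ≤ t} := fun t ht => ht.1
  rw [← sub_eq_zero, ← norm_le_zero_iff]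
  refine le_of_forall_pos_le_add fun ε hε => ?_
  set δ : ℝ := ε / (2 * ‖A‖ + 2) with hδdef
  have hδpos : 0 < δ := by positivity
  obtain ⟨p, hp⟩ := exists_polynomial_near_of_continuousOn 0 M f (hf.mono hIcc) δ hδpos
  have h1 : ‖cfc f (adjoint A * A) - cfc p.eval (adjoint A * A)‖ ≤ δ := by
    rw [← cfc_sub f p.eval (adjoint A * A) (hf.mono hPpos)
      ((Polynomial.continuous p).continuousOn)]
    refine norm_cfc_le hδpos.le fun t ht => ?_
    rw [Real.norm_eq_abs, abs_sub_comm]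
    exact (hp t (hPM ht)).le
  have h2 : ‖cfc f (A * adjoint A) - cfc p.eval (A * adjoint A)‖ ≤ δ := by
    rw [← cfc_sub f p.eval (A * adjoint A) (hf.mono hQpos)
      ((Polynomial.continuous p).continuousOn)]
    refine norm_cfc_le hδpos.le fun t ht => ?_
    rw [Real.norm_eq_abs, abs_sub_comm]
    exact (hp t (hQM ht)).le
  have h3 : A * cfc p.eval (adjoint A * A) = cfc p.eval (A * adjoint A) * A := by
    rw [cfc_polynomial p (adjoint A * A), cfc_polynomial p (A * adjoint A), mcs_aeval_comm]
  calc ‖A * cfc f (adjoint A * A) - cfc f (A * adjoint A) * A‖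
      = ‖A * (cfc f (adjoint A * A) - cfc p.eval (adjoint A * A))
          + (cfc p.eval (A * adjoint A) - cfc f (A * adjoint A)) * A‖ := by
        rw [mul_sub, sub_mul, h3, sub_add_sub_cancel]
    _ ≤ ‖A * (cfc f (adjoint A * A) - cfc p.eval (adjoint A * A))‖
          + ‖(cfc p.eval (A * adjoint A) - cfc f (A * adjoint A)) * A‖ := norm_add_le _ _
    _ ≤ ‖A‖ * δ + δ * ‖A‖ := by
        refine add_le_add ((norm_mul_le _ _).trans ?_) ((norm_mul_le _ _).trans ?_)
        · exact mul_le_mul_of_nonneg_left h1 (norm_nonneg A)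
        · rw [norm_sub_rev]
          exact mul_le_mul_of_nonneg_right h2 (norm_nonneg A)
    _ ≤ 0 + ε := by
        have hA : (0:ℝ) ≤ ‖A‖ := norm_nonneg A
        have hkey : (2 * ‖A‖ + 2) * δ = ε := by
          rw [hδdef, mul_comm, div_mul_cancel₀]
          positivity
        nlinarith

private lemma mcs_inner_re_mono {T S : H →L[ℂ] H} (h : T ≤ S) (v : H) :
    (inner ℂ (T v) v : ℂ).re ≤ (inner ℂ (S v) v : ℂ).re := by
  have h0 := ((ContinuousLinearMap.le_def T S).mp h).inner_nonneg_left v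
  rw [ContinuousLinearMap.sub_apply, inner_sub_left] at h0
  replace h0 := (Complex.le_def.mp h0).1
  simp only [Complex.zero_re, Complex.sub_re] at h0
  linarith

private lemma mcs_re_inner_self (v : H) : (inner ℂ v v : ℂ).re = ‖v‖ ^ 2 := by
  rw [inner_self_eq_norm_sq_to_K]
  norm_cast

private lemma mcs_norm_sq (B : H →L[ℂ] H) (hB : IsSelfAdjoint B) (v : H) :
    ‖B v‖ ^ 2 = (inner ℂ ((B * B) v) v : ℂ).re := by
  have hsym := (isSelfAdjoint_iff_isSymmetric).mp hB
  rw [ContinuousLinearMap.mul_apply]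
  have h1 : (inner ℂ (B (B v)) v : ℂ) = inner ℂ (B v) (B v) := hsym (B v) v
  rw [h1, inner_self_eq_norm_sq_to_K]
  norm_cast

private lemma mcs_conj (A : H →L[ℂ] H) (S : H →L[ℂ] H) (v : H) :
    (inner ℂ (S (A v)) (A v) : ℂ) = inner ℂ ((adjoint A * S * A) v) v := by
  rw [ContinuousLinearMap.mul_apply, ContinuousLinearMap.mul_apply]
  exact (ContinuousLinearMap.adjoint_inner_left A v (S (A v))).symm

end Aux

theorem mixed_cauchy_schwarz {H : Type*} [NormedAddCommGroup H] [InnerProductSpace ℂ H] [CompleteSpace H]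
    (A : H →L[ℂ] H) (x y : H) (α : ℝ) (hα : α ∈ Set.Icc (0 : ℝ) 1) :
    ‖(inner ℂ (A x) y : ℂ)‖ ^ 2
      ≤ ((inner ℂ ((cfc (fun t : ℝ => t ^ α) (adjoint A * A)) x) x : ℂ)).re
        * ((inner ℂ ((cfc (fun t : ℝ => t ^ (1 - α)) (A * adjoint A)) y) y : ℂ)).re := by
  obtain ⟨hα0, hα1⟩ := hα
  have hP : IsSelfAdjoint (adjoint A * A) := mcs_sa_left A
  have hQ : IsSelfAdjoint (A * adjoint A) := mcs_sa_right A
  have hPpos : spectrum ℝ (adjoint A * A) ⊆ {t : ℝ | 0 ≤ t} :=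
    fun t ht => spectrum_nonneg_of_nonneg (mcs_nonneg_left A) ht
  have hQpos : spectrum ℝ (A * adjoint A) ⊆ {t : ℝ | 0 ≤ t} :=
    fun t ht => spectrum_nonneg_of_nonneg (mcs_nonneg_right A) ht
  rcases eq_or_lt_of_le hα0 with h0 | hα0'
  · -- α = 0
    have e1 : cfc (fun t : ℝ => t ^ α) (adjoint A * A) = 1 := by
      have he : (fun t : ℝ => t ^ α) = fun _ : ℝ => (1:ℝ) := by
        funext t; rw [← h0, Real.rpow_zero]
      rw [he, cfc_const_one ℝ (adjoint A * A)]
    have e2 : cfc (fun t : ℝ => t ^ (1 - α)) (A * adjoint A) = A * adjoint A := by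
      have he : (fun t : ℝ => t ^ (1 - α)) = fun t : ℝ => t := by
        funext t; rw [← h0, sub_zero, Real.rpow_one]
      rw [he, cfc_id' ℝ (A * adjoint A)]
    have e3 : (inner ℂ ((A * adjoint A) y) y : ℂ) = inner ℂ (adjoint A y) (adjoint A y) := by
      rw [ContinuousLinearMap.mul_apply]
      exact (ContinuousLinearMap.adjoint_inner_right A (adjoint A y) y).symm
    have e4 : (inner ℂ (A x) y : ℂ) = inner ℂ x (adjoint A y) :=
      (ContinuousLinearMap.adjoint_inner_right A x y).symm
    rw [e1, e2, ContinuousLinearMap.one_apply, e3, e4, mcs_re_inner_self, mcs_re_inner_self, ← mul_pow]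
    exact pow_le_pow_left₀ (norm_nonneg _) (norm_inner_le_norm x (adjoint A y)) 2
  rcases eq_or_lt_of_le hα1 with h1 | hα1'
  · -- α = 1
    have e1 : cfc (fun t : ℝ => t ^ α) (adjoint A * A) = adjoint A * A := by
      have he : (fun t : ℝ => t ^ α) = fun t : ℝ => t := by
        funext t; rw [h1, Real.rpow_one]
      rw [he, cfc_id' ℝ (adjoint A * A)]
    have e2 : cfc (fun t : ℝ => t ^ (1 - α)) (A * adjoint A) = 1 := by
      have he : (fun t : ℝ => t ^ (1 - α)) = fun _ : ℝ => (1:ℝ) := by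
        funext t; rw [h1, sub_self, Real.rpow_zero]
      rw [he, cfc_const_one ℝ (A * adjoint A)]
    have e3 : (inner ℂ ((adjoint A * A) x) x : ℂ) = inner ℂ (A x) (A x) := by
      rw [ContinuousLinearMap.mul_apply]
      exact ContinuousLinearMap.adjoint_inner_left A x (A x)
    rw [e1, e2, ContinuousLinearMap.one_apply, e3, mcs_re_inner_self, mcs_re_inner_self, ← mul_pow]
    exact pow_le_pow_left₀ (norm_nonneg _) (norm_inner_le_norm (A x) y) 2
  -- main case: 0 < α < 1
  have hβ : (0:ℝ) < 1 - α := by linarith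
  set F : ℝ := ((inner ℂ ((cfc (fun t : ℝ => t ^ α) (adjoint A * A)) x) x : ℂ)).re with hFdef
  set G : ℝ := ((inner ℂ ((cfc (fun t : ℝ => t ^ (1 - α)) (A * adjoint A)) y) y : ℂ)).re with hGdef
  have hrpowα : Continuous (fun t : ℝ => t ^ α) :=
    continuous_iff_continuousAt.2 fun t => Real.continuousAt_rpow_const t α (Or.inr hα0)
  have hrpowβ : Continuous (fun t : ℝ => t ^ (1 - α)) :=
    continuous_iff_continuousAt.2 fun t => Real.continuousAt_rpow_const t (1 - α) (Or.inr hβ.le)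
  have key : ∀ ε : ℝ, 0 < ε →
      ‖(inner ℂ (A x) y : ℂ)‖ ^ 2 ≤ F * G + F * ‖y‖ ^ 2 * ε ^ (1 - α) := by
    intro ε hε
    have hcont : ∀ c : ℝ, ContinuousOn (fun t : ℝ => (t + ε) ^ c) {t : ℝ | 0 ≤ t} := by
      intro c t ht
      simp only [Set.mem_setOf_eq] at ht
      have hadd : ContinuousAt (fun s : ℝ => s + ε) t := (continuous_add_right ε).continuousAt
      exact (hadd.rpow_const (Or.inl (by positivity))).continuousWithinAt
    set g : ℝ → ℝ := fun t => (t + ε) ^ (-((1 - α) / 2)) with hgdef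
    set h : ℝ → ℝ := fun t => (t + ε) ^ ((1 - α) / 2) with hhdef
    have hg : ContinuousOn g {t : ℝ | 0 ≤ t} := hcont _
    have hh : ContinuousOn h {t : ℝ | 0 ≤ t} := hcont _
    set B : H →L[ℂ] H := cfc g (A * adjoint A) with hBdef
    set C : H →L[ℂ] H := cfc h (A * adjoint A) with hCdef
    have hBsa : IsSelfAdjoint B := cfc_predicate g (A * adjoint A)
    have hCsa : IsSelfAdjoint C := cfc_predicate h (A * adjoint A)
    have hBC : B * C = 1 := by
      rw [hBdef, hCdef, ← cfc_mul g h (A * adjoint A) (hg.mono hQpos) (hh.mono hQpos)]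
      have hcongr : ∀ t ∈ spectrum ℝ (A * adjoint A), g t * h t = (fun _ : ℝ => (1:ℝ)) t := by
        intro t ht
        have ht0 : (0:ℝ) ≤ t := hQpos ht
        rw [hgdef, hhdef]
        simp only
        rw [← Real.rpow_add (by linarith), neg_add_cancel, Real.rpow_zero]
      rw [cfc_congr hcongr, cfc_const_one ℝ (A * adjoint A)]
    have hy : (B * C) y = y := by rw [hBC, ContinuousLinearMap.one_apply]
    have e0 : (inner ℂ (A x) y : ℂ) = inner ℂ (B (A x)) (C y) := by
      conv_lhs => rw [← hy, ContinuousLinearMap.mul_apply]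
      exact ((isSelfAdjoint_iff_isSymmetric.mp hBsa) (A x) (C y)).symm
    -- first factor
    have hf2 : ContinuousOn (fun t => g t * g t) {t : ℝ | 0 ≤ t} := hg.mul hg
    have hBB : B * B = cfc (fun t => g t * g t) (A * adjoint A) :=
      (cfc_mul g g (A * adjoint A) (hg.mono hQpos) (hg.mono hQpos)).symm
    have hcomm : adjoint A * cfc (fun t => g t * g t) (A * adjoint A)
        = cfc (fun t => g t * g t) (adjoint A * A) * adjoint A := by
      have hc := mcs_cfc_comm (adjoint A) (fun t => g t * g t) hf2
      rwa [adjoint_adjoint] at hc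
    have hmul2 : cfc (fun t => (g t * g t) * t) (adjoint A * A)
        = cfc (fun t => g t * g t) (adjoint A * A) * (adjoint A * A) := by
      have hc := cfc_mul (fun t => g t * g t) (fun t : ℝ => t) (adjoint A * A)
        (hf2.mono hPpos) continuousOn_id
      rw [cfc_id' ℝ (adjoint A * A)] at hc
      exact hc
    have hop1 : adjoint A * (B * B) * A = cfc (fun t => (g t * g t) * t) (adjoint A * A) := by
      rw [hBB, hcomm, mul_assoc, hmul2]
    have hle1 : cfc (fun t => (g t * g t) * t) (adjoint A * A)
        ≤ cfc (fun t : ℝ => t ^ α) (adjoint A * A) := by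
      refine cfc_mono (fun t ht => ?_) ((hf2.mono hPpos).mul continuousOn_id)
        (hrpowα.continuousOn)
      have ht0 : (0:ℝ) ≤ t := hPpos ht
      have htε : (0:ℝ) < t + ε := by linarith
      have hgg : g t * g t = (t + ε) ^ (-(1 - α)) := by
        rw [hgdef]
        simp only
        rw [← Real.rpow_add htε]
        congr 1
        ring
      rw [hgg]
      rcases eq_or_lt_of_le ht0 with ht0' | ht0'
      · rw [← ht0', mul_zero, Real.zero_rpow (ne_of_gt hα0')]
      · calc (t + ε) ^ (-(1 - α)) * t ≤ t ^ (-(1 - α)) * t := by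
              refine mul_le_mul_of_nonneg_right ?_ ht0
              exact Real.rpow_le_rpow_of_nonpos ht0' (by linarith) (by linarith)
          _ = t ^ α := by
              nth_rewrite 2 [← Real.rpow_one t]
              rw [← Real.rpow_add ht0']
              congr 1
              ring
    have hu : ‖B (A x)‖ ^ 2 ≤ F := by
      rw [mcs_norm_sq B hBsa (A x)]
      have hr : (inner ℂ ((B * B) (A x)) (A x) : ℂ)
          = inner ℂ ((cfc (fun t => (g t * g t) * t) (adjoint A * A)) x) x := by
        rw [mcs_conj A (B * B) x, hop1]
      rw [hr, hFdef]
      exact mcs_inner_re_mono hle1 x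
    -- second factor
    have hCC : C * C = cfc (fun t => h t * h t) (A * adjoint A) :=
      (cfc_mul h h (A * adjoint A) (hh.mono hQpos) (hh.mono hQpos)).symm
    have hle2 : cfc (fun t => h t * h t) (A * adjoint A)
        ≤ cfc (fun t : ℝ => t ^ (1 - α) + ε ^ (1 - α)) (A * adjoint A) := by
      refine cfc_mono (fun t ht => ?_) ((hh.mono hQpos).mul (hh.mono hQpos))
        ((hrpowβ.continuousOn).add continuousOn_const)
      have ht0 : (0:ℝ) ≤ t := hQpos ht
      have hhh : h t * h t = (t + ε) ^ (1 - α) := by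
        rw [hhdef]
        simp only
        rw [← Real.rpow_add (by linarith)]
        congr 1
        ring
      rw [hhh]
      exact mcs_add_rpow ht0 hε.le (by linarith) (by linarith)
    have hsplit : cfc (fun t : ℝ => t ^ (1 - α) + ε ^ (1 - α)) (A * adjoint A)
        = cfc (fun t : ℝ => t ^ (1 - α)) (A * adjoint A)
          + algebraMap ℝ (H →L[ℂ] H) (ε ^ (1 - α)) :=
      cfc_add_const (ε ^ (1 - α)) (fun t : ℝ => t ^ (1 - α)) (A * adjoint A)
        (hrpowβ.continuousOn) hQ
    have hsum : ((inner ℂ ((cfc (fun t : ℝ => t ^ (1 - α)) (A * adjoint A)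
          + algebraMap ℝ (H →L[ℂ] H) (ε ^ (1 - α))) y) y : ℂ)).re
        = G + ε ^ (1 - α) * ‖y‖ ^ 2 := by
      rw [ContinuousLinearMap.add_apply, inner_add_left, Complex.add_re, hGdef]
      congr 1
      rw [Algebra.algebraMap_eq_smul_one, ContinuousLinearMap.smul_apply, ContinuousLinearMap.one_apply,
        RCLike.real_smul_eq_coe_smul (K := ℂ), inner_smul_left, RCLike.conj_ofReal]
      have hz : (inner ℂ y y : ℂ) = ((‖y‖ ^ 2 : ℝ) : ℂ) := by
        rw [inner_self_eq_norm_sq_to_K]; norm_cast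
      rw [show (RCLike.ofReal (ε ^ (1 - α)) : ℂ) = ((ε ^ (1 - α) : ℝ) : ℂ) from rfl,
        hz, ← Complex.ofReal_mul, Complex.ofReal_re]
    have hv : ‖C y‖ ^ 2 ≤ G + ε ^ (1 - α) * ‖y‖ ^ 2 := by
      rw [mcs_norm_sq C hCsa y, hCC]
      calc ((inner ℂ ((cfc (fun t => h t * h t) (A * adjoint A)) y) y : ℂ)).re
          ≤ ((inner ℂ ((cfc (fun t : ℝ => t ^ (1 - α) + ε ^ (1 - α)) (A * adjoint A)) y) y : ℂ)).re :=
            mcs_inner_re_mono hle2 y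
        _ = G + ε ^ (1 - α) * ‖y‖ ^ 2 := by rw [hsplit, hsum]
    have hu0 : (0:ℝ) ≤ ‖B (A x)‖ ^ 2 := sq_nonneg _
    have hF0 : (0:ℝ) ≤ F := le_trans hu0 hu
    calc ‖(inner ℂ (A x) y : ℂ)‖ ^ 2
        = ‖(inner ℂ (B (A x)) (C y) : ℂ)‖ ^ 2 := by rw [e0]
      _ ≤ (‖B (A x)‖ * ‖C y‖) ^ 2 :=
          pow_le_pow_left₀ (norm_nonneg _) (norm_inner_le_norm _ _) 2
      _ = ‖B (A x)‖ ^ 2 * ‖C y‖ ^ 2 := mul_pow _ _ 2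
      _ ≤ F * (G + ε ^ (1 - α) * ‖y‖ ^ 2) :=
          mul_le_mul hu hv (sq_nonneg _) hF0
      _ = F * G + F * ‖y‖ ^ 2 * ε ^ (1 - α) := by ring
  have htend : Filter.Tendsto (fun ε : ℝ => F * G + F * ‖y‖ ^ 2 * ε ^ (1 - α))
      (nhdsWithin 0 (Set.Ioi 0)) (nhds (F * G)) := by
    have h1 : ContinuousAt (fun s : ℝ => s ^ (1 - α)) 0 :=
      Real.continuousAt_rpow_const 0 (1 - α) (Or.inr hβ.le)
    have h2 : Filter.Tendsto (fun ε : ℝ => ε ^ (1 - α)) (nhds 0) (nhds 0) := by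
      simpa [Real.zero_rpow (ne_of_gt hβ)] using h1.tendsto
    have h3 := (tendsto_const_nhds (x := F * G)).add
      ((tendsto_const_nhds (x := F * ‖y‖ ^ 2)).mul h2)
    simp only [mul_zero, add_zero] at h3
    exact h3.mono_left nhdsWithin_le_nhds
  refine ge_of_tendsto htend ?_
  filter_upwards [self_mem_nhdsWithin] with ε hε
  exact key ε hε
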